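/- Epoch-level contraction for RR under PL and SGC (noiseless case): suppose $f = \frac{1}{n}\sum_i f_i$ is $L$-smooth, $\mu$-PL with minimum $f(x^*)$, each $f_i$ is $L_{\max}$-smooth, and the SGC holds: $\frac{1}{n}\sum_i\|\nabla f_i(x)\|^2 \leq \rho\|\nabla f(x)\|^2$. Let one epoch of random reshuffling start at $x_0$ and end at $x_n$, with step size $\eta \leq \min\{\frac{1}{2nL_{\max}}, \frac{1}{2\sqrt{2}L_{\max}\sqrt{n\rho}}\}$. Then $\mathbb{E}[f(x_n)] - f(x^*) \leq \left(1 - \frac{n\mu\eta}{4}\right)(f(x_0) - f(x^*))$, where the expectation is over the random permutation. -/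

import Mathlib

noncomputable section

set_option maxHeartbeats 2000000

open Finset
open scoped RealInnerProductSpace

/-! ### Auxiliary lemmas -/

section DescentLemma

variable {E : Type*} [NormedAddCommGroup E] [InnerProductSpace ℝ E] [CompleteSpace E]

lemma rr_hasDerivAt_comp_line (f : E → ℝ) (hf : Differentiable ℝ f) (x v : E) (t : ℝ) :
    HasDerivAt (fun s : ℝ => f (x + s • v)) ⟪gradient f (x + t • v), v⟫ t := by
  have hc : HasDerivAt (fun s : ℝ => x + s • v) v t := by
    simpa using ((hasDerivAt_id t).smul_const v).const_add x
  have h1 : HasFDerivAt f (InnerProductSpace.toDual ℝ E (gradient f (x + t • v))) (x + t • v) :=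
    (hf (x + t • v)).hasGradientAt.hasFDerivAt
  exact h1.comp_hasDerivAt t hc

/-- Descent lemma: a function with an `L`-Lipschitz gradient admits a quadratic upper bound. -/
lemma rr_descent_lemma (f : E → ℝ) (hf : Differentiable ℝ f) (L : ℝ)
    (hlip : ∀ x y, ‖gradient f x - gradient f y‖ ≤ L * ‖x - y‖) (x y : E) :
    f y ≤ f x + ⟪gradient f x, y - x⟫ + L / 2 * ‖y - x‖ ^ 2 := by
  set v := y - x with hv
  set g : ℝ → ℝ := fun t => f x + t * ⟪gradient f x, v⟫ + L / 2 * (t ^ 2 * ‖v‖ ^ 2)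
      - f (x + t • v) with hg
  have hder : ∀ t : ℝ, HasDerivAt g
      (⟪gradient f x, v⟫ + L / 2 * (2 * t * ‖v‖ ^ 2) - ⟪gradient f (x + t • v), v⟫) t := by
    intro t
    have h1 : HasDerivAt (fun t : ℝ => f x + t * ⟪gradient f x, v⟫
        + L / 2 * (t ^ 2 * ‖v‖ ^ 2)) (⟪gradient f x, v⟫ + L / 2 * (2 * t * ‖v‖ ^ 2)) t := by
      have ha : HasDerivAt (fun t : ℝ => t * ⟪gradient f x, v⟫) ⟪gradient f x, v⟫ t := by
        simpa using (hasDerivAt_id t).mul_const ⟪gradient f x, v⟫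
      have hb : HasDerivAt (fun t : ℝ => t ^ 2 * ‖v‖ ^ 2) (2 * t * ‖v‖ ^ 2) t := by
        have := (hasDerivAt_pow 2 t).mul_const (‖v‖ ^ 2)
        exact this.congr_deriv (by norm_num)
      exact ((ha.const_add (f x)).add (hb.const_mul (L / 2)))
    exact h1.sub (rr_hasDerivAt_comp_line f hf x v t)
  have hmono : MonotoneOn g (Set.Icc (0:ℝ) 1) := by
    apply monotoneOn_of_deriv_nonneg (convex_Icc 0 1)
    · exact Continuous.continuousOn (by
        apply Continuous.sub
        · fun_prop
        · exact hf.continuous.comp (by fun_prop))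
    · intro t _
      exact ((hder t).differentiableAt).differentiableWithinAt
    · intro t ht
      rw [interior_Icc] at ht
      rw [(hder t).deriv]
      have h2 : ‖gradient f (x + t • v) - gradient f x‖ ≤ L * (t * ‖v‖) := by
        have := hlip (x + t • v) x
        simpa [norm_smul, abs_of_nonneg (le_of_lt ht.1), mul_assoc] using this
      have h3 : ⟪gradient f (x + t • v), v⟫ - ⟪gradient f x, v⟫ ≤ L * (t * ‖v‖) * ‖v‖ := by
        calc ⟪gradient f (x + t • v), v⟫ - ⟪gradient f x, v⟫
            = ⟪gradient f (x + t • v) - gradient f x, v⟫ := by rw [inner_sub_left]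
          _ ≤ ‖gradient f (x + t • v) - gradient f x‖ * ‖v‖ := real_inner_le_norm _ _
          _ ≤ L * (t * ‖v‖) * ‖v‖ :=
              mul_le_mul_of_nonneg_right h2 (norm_nonneg _)
      nlinarith [h3]
  have h01 : (0:ℝ) ∈ Set.Icc (0:ℝ) 1 := by norm_num
  have h11 : (1:ℝ) ∈ Set.Icc (0:ℝ) 1 := by norm_num
  have hle := hmono h01 h11 (by norm_num)
  have hg0 : g 0 = 0 := by simp [hg]
  have hg1 : g 1 = f x + ⟪gradient f x, v⟫ + L / 2 * ‖v‖ ^ 2 - f y := by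
    simp [hg, hv]
  rw [hg0, hg1] at hle
  linarith

lemma rr_gradient_avg {n : ℕ} (f : Fin n → E → ℝ) (hdiff : ∀ i, Differentiable ℝ (f i))
    (x : E) :
    HasGradientAt (fun x => (n : ℝ)⁻¹ * ∑ i, f i x)
      ((n : ℝ)⁻¹ • ∑ i, gradient (f i) x) x := by
  have h1 : ∀ i : Fin n, HasFDerivAt (f i)
      (InnerProductSpace.toDual ℝ E (gradient (f i) x)) x :=
    fun i => ((hdiff i) x).hasGradientAt.hasFDerivAt
  have h2 : HasFDerivAt (fun x => ∑ i, f i x)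
      (∑ i, InnerProductSpace.toDual ℝ E (gradient (f i) x)) x := HasFDerivAt.fun_sum fun i _ => h1 i
  have h4 := (h2.const_mul ((n : ℝ)⁻¹)).hasGradientAt
  convert h4 using 1
  simp [map_sum]
  rfl

omit [CompleteSpace E] in
lemma rr_offdiag_inner_eq (n : ℕ) (v : Fin n → E) :
    ∑ k, ∑ l ∈ univ.erase k, ⟪v k, v l⟫
      = ‖∑ k, v k‖ ^ 2 - ∑ k, ‖v k‖ ^ 2 := by
  have h1 : ‖∑ k, v k‖ ^ 2 = ∑ k, ∑ l, ⟪v k, v l⟫ := by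
    rw [← real_inner_self_eq_norm_sq, sum_inner]
    exact Finset.sum_congr rfl fun k _ => inner_sum _ _ _
  have h2 : ∀ k, ∑ l, ⟪v k, v l⟫ = ‖v k‖ ^ 2 + ∑ l ∈ univ.erase k, ⟪v k, v l⟫ := by
    intro k
    rw [← Finset.add_sum_erase _ _ (mem_univ k), real_inner_self_eq_norm_sq]
  rw [h1, Finset.sum_congr rfl fun k _ => h2 k, Finset.sum_add_distrib]
  ring

end DescentLemma

section PermLemmas

lemma rr_perm_sum_apply_eq {n : ℕ} (c : Fin n → ℝ) (i i' : Fin n) :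
    ∑ π : Equiv.Perm (Fin n), c (π i) = ∑ π : Equiv.Perm (Fin n), c (π i') := by
  have := Equiv.sum_comp (Equiv.mulRight (Equiv.swap i i'))
    (fun π : Equiv.Perm (Fin n) => c (π i))
  rw [← this]
  apply Finset.sum_congr rfl
  intro π _
  simp [Equiv.Perm.mul_apply, Equiv.swap_apply_left]

lemma rr_perm_sum_single {n : ℕ} (hn : 1 ≤ n) (c : Fin n → ℝ) (i : Fin n) :
    ∑ π : Equiv.Perm (Fin n), c (π i) = ((n.factorial : ℝ) / n) * ∑ k, c k := by
  have key : (n : ℝ) * ∑ π : Equiv.Perm (Fin n), c (π i)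
      = (n.factorial : ℝ) * ∑ k, c k := by
    calc (n : ℝ) * ∑ π : Equiv.Perm (Fin n), c (π i)
        = ∑ _i' : Fin n, ∑ π : Equiv.Perm (Fin n), c (π i) := by
          rw [Finset.sum_const]; simp [mul_comm, Finset.card_univ]
      _ = ∑ i' : Fin n, ∑ π : Equiv.Perm (Fin n), c (π i') :=
          Finset.sum_congr rfl fun i' _ => rr_perm_sum_apply_eq c i i'
      _ = ∑ π : Equiv.Perm (Fin n), ∑ i' : Fin n, c (π i') := Finset.sum_comm
      _ = ∑ _π : Equiv.Perm (Fin n), ∑ k, c k := by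
          apply Finset.sum_congr rfl
          intro π _
          exact Equiv.sum_comp π c
      _ = (n.factorial : ℝ) * ∑ k, c k := by
          rw [Finset.sum_const]; simp [Finset.card_univ, Fintype.card_perm, mul_comm]
  have hn0 : (n : ℝ) ≠ 0 := by positivity
  field_simp
  linarith [key]

lemma rr_exists_perm_pair {n : ℕ} (i i' j j' : Fin n) (h1 : i ≠ i') (h2 : j ≠ j') :
    ∃ σ : Equiv.Perm (Fin n), σ j = i ∧ σ j' = i' := by
  classical
  set τ := Equiv.swap j i with hτ
  have hτj : τ j = i := Equiv.swap_apply_left j i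
  have hk : τ j' ≠ i := by
    intro h
    exact h2 (τ.injective (h.trans hτj.symm)).symm
  refine ⟨τ.trans (Equiv.swap (τ j') i'), ?_, ?_⟩
  · simp only [Equiv.trans_apply, hτj]
    exact Equiv.swap_apply_of_ne_of_ne (Ne.symm hk) h1
  · simp only [Equiv.trans_apply]
    exact Equiv.swap_apply_left _ _

lemma rr_perm_sum_pair_eq {n : ℕ} (H : Fin n → Fin n → ℝ) (i i' j j' : Fin n)
    (h1 : i ≠ i') (h2 : j ≠ j') :
    ∑ π : Equiv.Perm (Fin n), H (π i) (π i')
      = ∑ π : Equiv.Perm (Fin n), H (π j) (π j') := by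
  obtain ⟨σ, hσj, hσj'⟩ := rr_exists_perm_pair i i' j j' h1 h2
  have := Equiv.sum_comp (Equiv.mulRight σ)
    (fun π : Equiv.Perm (Fin n) => H (π j) (π j'))
  rw [← this]
  apply Finset.sum_congr rfl
  intro π _
  simp [Equiv.Perm.mul_apply, hσj, hσj']

lemma rr_perm_sum_pair {n : ℕ} (hn : 2 ≤ n) (H : Fin n → Fin n → ℝ) (i i' : Fin n)
    (h1 : i ≠ i') :
    ∑ π : Equiv.Perm (Fin n), H (π i) (π i')
      = ((n.factorial : ℝ) / (n * (n - 1))) * ∑ k, ∑ l ∈ univ.erase k, H k l := by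
  have hn1 : 1 ≤ n := le_trans one_le_two hn
  have hcard : ∀ j : Fin n, ((univ.erase j).card : ℝ) = (n : ℝ) - 1 := by
    intro j
    rw [Finset.card_erase_of_mem (mem_univ j), Finset.card_univ, Fintype.card_fin,
      Nat.cast_sub hn1, Nat.cast_one]
  have key : ((n : ℝ) * ((n : ℝ) - 1)) * ∑ π : Equiv.Perm (Fin n), H (π i) (π i')
      = (n.factorial : ℝ) * ∑ k, ∑ l ∈ univ.erase k, H k l := by
    calc ((n : ℝ) * ((n : ℝ) - 1)) * ∑ π : Equiv.Perm (Fin n), H (π i) (π i')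
        = ∑ j : Fin n, ∑ _j' ∈ univ.erase j, ∑ π : Equiv.Perm (Fin n), H (π i) (π i') := by
          have h2 : ∀ j : Fin n, ∑ _j' ∈ univ.erase j,
              (∑ π : Equiv.Perm (Fin n), H (π i) (π i'))
              = ((n : ℝ) - 1) * ∑ π : Equiv.Perm (Fin n), H (π i) (π i') := by
            intro j
            rw [Finset.sum_const, nsmul_eq_mul, hcard]
          rw [Finset.sum_congr rfl (fun j _ => h2 j), Finset.sum_const, nsmul_eq_mul,
            Finset.card_univ, Fintype.card_fin]
          ring
      _ = ∑ j : Fin n, ∑ j' ∈ univ.erase j, ∑ π : Equiv.Perm (Fin n), H (π j) (π j') := by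
          apply Finset.sum_congr rfl
          intro j _
          apply Finset.sum_congr rfl
          intro j' hj'
          exact rr_perm_sum_pair_eq H i i' j j' h1 (Finset.ne_of_mem_erase hj').symm
      _ = ∑ π : Equiv.Perm (Fin n), ∑ j : Fin n, ∑ j' ∈ univ.erase j, H (π j) (π j') := by
          rw [Finset.sum_comm]
          exact Finset.sum_congr rfl fun j _ => Finset.sum_comm
      _ = ∑ _π : Equiv.Perm (Fin n), ∑ k, ∑ l ∈ univ.erase k, H k l := by
          apply Finset.sum_congr rfl
          intro π _
          rw [← Equiv.sum_comp π (fun k => ∑ l ∈ univ.erase k, H k l)]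
          apply Finset.sum_congr rfl
          intro j _
          refine Finset.sum_bij (fun l _ => π l) ?_ ?_ ?_ ?_
          · intro a ha
            simp only [mem_erase, mem_univ, and_true] at ha ⊢
            exact fun h => ha (π.injective h)
          · intro a _ b _ h
            exact π.injective h
          · intro b hb
            refine ⟨π.symm b, ?_, by simp⟩
            simp only [mem_erase, mem_univ, and_true] at hb ⊢
            intro h
            exact hb (by rw [← h]; simp)
          · intro a _
            rfl
      _ = (n.factorial : ℝ) * ∑ k, ∑ l ∈ univ.erase k, H k l := by
          rw [Finset.sum_const, nsmul_eq_mul, Finset.card_univ, Fintype.card_perm,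
            Fintype.card_fin]
  have hn0 : ((n : ℝ) * ((n : ℝ) - 1)) ≠ 0 := by
    have : (2 : ℝ) ≤ (n : ℝ) := by exact_mod_cast hn
    nlinarith
  rw [div_mul_eq_mul_div, eq_div_iff hn0]
  linarith [key]

end PermLemmas

section ExpLemma

variable {E : Type*} [NormedAddCommGroup E] [InnerProductSpace ℝ E]

lemma rr_exp_sum_sq_perm {n : ℕ} (hn : 2 ≤ n) (v : Fin n → E) (A : Finset (Fin n)) :
    ∑ π : Equiv.Perm (Fin n), ‖∑ i ∈ A, v (π i)‖ ^ 2
      = ((n.factorial : ℝ) / n) * ((A.card : ℝ) * ∑ k, ‖v k‖ ^ 2)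
        + ((n.factorial : ℝ) / (n * (n - 1)))
          * (((A.card : ℝ) * ((A.card : ℝ) - 1)) * ∑ k, ∑ l ∈ univ.erase k, ⟪v k, v l⟫) := by
  have hn1 : 1 ≤ n := le_trans one_le_two hn
  set V := ∑ k, ‖v k‖ ^ 2 with hV
  set C := ∑ k, ∑ l ∈ univ.erase k, ⟪v k, v l⟫ with hC
  calc ∑ π : Equiv.Perm (Fin n), ‖∑ i ∈ A, v (π i)‖ ^ 2
      = ∑ π : Equiv.Perm (Fin n), ∑ i ∈ A, ∑ i' ∈ A, ⟪v (π i), v (π i')⟫ := by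
        apply Finset.sum_congr rfl
        intro π _
        rw [← real_inner_self_eq_norm_sq, sum_inner]
        exact Finset.sum_congr rfl fun i _ => inner_sum _ _ _
    _ = ∑ i ∈ A, ∑ i' ∈ A, ∑ π : Equiv.Perm (Fin n), ⟪v (π i), v (π i')⟫ := by
        rw [Finset.sum_comm]
        exact Finset.sum_congr rfl fun i _ => Finset.sum_comm
    _ = ∑ i ∈ A, (((n.factorial : ℝ) / n) * V
          + ((A.card : ℝ) - 1) * (((n.factorial : ℝ) / (n * (n - 1))) * C)) := by
        apply Finset.sum_congr rfl
        intro i hi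
        rw [← Finset.add_sum_erase _ _ hi]
        congr 1
        · rw [show (∑ π : Equiv.Perm (Fin n), ⟪v (π i), v (π i)⟫)
              = ∑ π : Equiv.Perm (Fin n), ‖v (π i)‖ ^ 2 from
            Finset.sum_congr rfl fun π _ => real_inner_self_eq_norm_sq _]
          exact rr_perm_sum_single hn1 (fun k => ‖v k‖ ^ 2) i
        · rw [Finset.sum_congr rfl (fun i' hi' =>
            rr_perm_sum_pair hn (fun k l => ⟪v k, v l⟫) i i'
              (Finset.ne_of_mem_erase hi').symm)]
          rw [Finset.sum_const, nsmul_eq_mul, Finset.card_erase_of_mem hi,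
            Nat.cast_sub (Finset.card_pos.mpr ⟨i, hi⟩), Nat.cast_one]
    _ = _ := by
        rw [Finset.sum_const, nsmul_eq_mul]
        ring

end ExpLemma

lemma rr_sum_range_cast_le (n : ℕ) : ∑ j ∈ range n, (j : ℝ) ≤ (n : ℝ) ^ 2 / 2 := by
  induction n with
  | zero => simp
  | succ m ih =>
    rw [Finset.sum_range_succ]
    push_cast
    nlinarith [ih]

lemma rr_sum_range_sq_le (n : ℕ) : ∑ j ∈ range n, (j : ℝ) ^ 2 ≤ (n : ℝ) ^ 3 / 3 := by
  induction n with
  | zero => simp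
  | succ m ih =>
    rw [Finset.sum_range_succ]
    push_cast
    nlinarith [ih, Nat.cast_nonneg (α := ℝ) m]

/-! ### The epoch iteration -/

/-- One epoch of (re)shuffled incremental updates: starting from `x0`, the
iterate after `j` steps using the sample order given by the permutation `π`,
gradient oracle `g` and step size `η`. -/
def epochIter {d n : ℕ}
    (g : Fin n → EuclideanSpace ℝ (Fin d) → EuclideanSpace ℝ (Fin d))
    (η : ℝ) (x0 : EuclideanSpace ℝ (Fin d)) (π : Equiv.Perm (Fin n)) :
    ℕ → EuclideanSpace ℝ (Fin d)
  | 0 => x0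
  | j + 1 =>
      if h : j < n then
        epochIter g η x0 π j - η • g (π ⟨j, h⟩) (epochIter g η x0 π j)
      else epochIter g η x0 π j

/-- Deterministic bound on the sum of squared iterate deviations within one epoch. -/
lemma rr_sumsq_bound {d n : ℕ} (hn : 2 ≤ n)
    (f : Fin n → EuclideanSpace ℝ (Fin d) → ℝ)
    (Lmax : ℝ) (hLmax : 0 < Lmax)
    (hsmooth_i : ∀ i, ∀ x y : EuclideanSpace ℝ (Fin d),
      ‖gradient (f i) x - gradient (f i) y‖ ≤ Lmax * ‖x - y‖)
    (η : ℝ) (hη0 : 0 < η) (hη1 : η * Lmax * n ≤ 1 / 2)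
    (x0 : EuclideanSpace ℝ (Fin d)) (π : Equiv.Perm (Fin n)) :
    ∑ j ∈ range n, ‖epochIter (fun i => gradient (f i)) η x0 π j - x0‖ ^ 2
      ≤ 4 * ∑ j ∈ range n,
          (η * ‖∑ k ∈ range j,
            (if h : k < n then gradient (f (π ⟨k, h⟩)) x0 else 0)‖) ^ 2 := by
  classical
  have hnR : (2 : ℝ) ≤ (n : ℝ) := by exact_mod_cast hn
  have hnR0 : (0 : ℝ) < (n : ℝ) := by linarith
  set q : ℝ := η * Lmax with hqdef
  have hq0 : 0 ≤ q := by positivity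
  have hqn : (n : ℝ) * q ≤ 1 / 2 := by rw [hqdef]; nlinarith [hη1]
  set X : ℕ → EuclideanSpace ℝ (Fin d) :=
    epochIter (fun i => gradient (f i)) η x0 π with hXdef
  set w : ℕ → EuclideanSpace ℝ (Fin d) :=
    fun k => if h : k < n then gradient (f (π ⟨k, h⟩)) (X k) else 0 with hwdef
  set vp : ℕ → EuclideanSpace ℝ (Fin d) :=
    fun k => if h : k < n then gradient (f (π ⟨k, h⟩)) x0 else 0 with hvpdef
  set S : ℕ → EuclideanSpace ℝ (Fin d) := fun j => ∑ k ∈ range j, vp k with hSdef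
  set a : ℕ → ℝ := fun j => ‖X j - x0‖ with hadef
  set b : ℕ → ℝ := fun j => η * ‖S j‖ with hbdef
  have ha0 : ∀ j, 0 ≤ a j := fun j => norm_nonneg _
  have hb0 : ∀ j, 0 ≤ b j := fun j => by positivity
  -- iterate formula
  have hX : ∀ j, j ≤ n → X j = x0 - η • ∑ k ∈ range j, w k := by
    intro j hj
    induction j with
    | zero => simp [hXdef, epochIter]
    | succ m ih =>
      have hm : m < n := hj
      have ihm := ih (le_of_lt hm)
      have hstep : X (m + 1) = X m - η • w m := by
        rw [hXdef]
        show epochIter (fun i => gradient (f i)) η x0 π (m + 1) = _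
        rw [epochIter]
        rw [dif_pos hm]
        rw [hwdef]
        simp only [dif_pos hm]
        rfl
      rw [hstep, ihm, Finset.sum_range_succ, smul_add, sub_sub]
  -- deviation of oracle gradients
  have hwv : ∀ k, k < n → ‖w k - vp k‖ ≤ Lmax * a k := by
    intro k hk
    rw [hwdef, hvpdef]
    simp only [dif_pos hk]
    exact hsmooth_i _ _ _
  -- recursion for a
  have ha_le : ∀ j, j ≤ n → a j ≤ b j + q * ∑ k ∈ range j, a k := by
    intro j hj
    have h1 : X j - x0 = -(η • ∑ k ∈ range j, w k) := by
      rw [hX j hj]; abel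
    have h2 : a j = η * ‖∑ k ∈ range j, w k‖ := by
      rw [hadef]
      simp only
      rw [h1, norm_neg, norm_smul, Real.norm_eq_abs, abs_of_pos hη0]
    have h3 : ∑ k ∈ range j, w k = S j + ∑ k ∈ range j, (w k - vp k) := by
      rw [hSdef]
      simp only
      rw [Finset.sum_sub_distrib]
      abel
    have h4 : ‖∑ k ∈ range j, w k‖ ≤ ‖S j‖ + Lmax * ∑ k ∈ range j, a k := by
      rw [h3]
      refine le_trans (norm_add_le _ _) ?_
      gcongr
      refine le_trans (norm_sum_le _ _) ?_
      rw [Finset.mul_sum]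
      apply Finset.sum_le_sum
      intro k hk
      exact hwv k (lt_of_lt_of_le (Finset.mem_range.mp hk) hj)
    calc a j = η * ‖∑ k ∈ range j, w k‖ := h2
      _ ≤ η * (‖S j‖ + Lmax * ∑ k ∈ range j, a k) :=
          mul_le_mul_of_nonneg_left h4 (le_of_lt hη0)
      _ = b j + q * ∑ k ∈ range j, a k := by rw [hbdef, hqdef]; ring
  -- Gronwall-type bound
  have hpow2 : (1 + q) ^ n ≤ 2 := by
    have h1 : (1 + q) ≤ Real.exp q := by
      have := Real.add_one_le_exp q
      linarith
    have h2 : (1 + q) ^ n ≤ Real.exp q ^ n := pow_le_pow_left₀ (by linarith) h1 n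
    have h3 : Real.exp q ^ n = Real.exp (n * q) := (Real.exp_nat_mul q n).symm
    have h4 : Real.exp ((n : ℝ) * q) ≤ Real.exp (1 / 2) := Real.exp_le_exp.mpr hqn
    have h5 : Real.exp (1 / 2 : ℝ) ≤ 2 := by
      have hlog := Real.log_two_gt_d9
      have h6 : (1 / 2 : ℝ) ≤ Real.log 2 := by linarith
      calc Real.exp (1 / 2 : ℝ) ≤ Real.exp (Real.log 2) := Real.exp_le_exp.mpr h6
        _ = 2 := Real.exp_log (by norm_num)
    calc (1 + q) ^ n ≤ Real.exp q ^ n := h2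
      _ = Real.exp ((n : ℝ) * q) := h3
      _ ≤ Real.exp (1 / 2) := h4
      _ ≤ 2 := h5
  have hA : ∀ j, j ≤ n → ∑ k ∈ range j, a k ≤ (1 + q) ^ j * ∑ k ∈ range j, b k := by
    intro j hj
    induction j with
    | zero => simp
    | succ m ih =>
      have hm : m ≤ n := le_of_lt hj
      have ihm := ih hm
      have h1 : a m ≤ b m + q * ∑ k ∈ range m, a k := ha_le m hm
      have hbm : 0 ≤ ∑ k ∈ range m, b k := Finset.sum_nonneg fun k _ => hb0 k
      rw [Finset.sum_range_succ, Finset.sum_range_succ]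
      calc (∑ k ∈ range m, a k) + a m
          ≤ (∑ k ∈ range m, a k) + b m + q * ∑ k ∈ range m, a k := by linarith
        _ = (1 + q) * ∑ k ∈ range m, a k + b m := by ring
        _ ≤ (1 + q) * ((1 + q) ^ m * ∑ k ∈ range m, b k) + b m := by
            have := mul_le_mul_of_nonneg_left ihm (show (0:ℝ) ≤ 1 + q by linarith)
            linarith
        _ = (1 + q) ^ (m + 1) * ∑ k ∈ range m, b k + b m := by ring
        _ ≤ (1 + q) ^ (m + 1) * ∑ k ∈ range m, b k + (1 + q) ^ (m + 1) * b m := by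
            have hpow1 : (1 : ℝ) ≤ (1 + q) ^ (m + 1) := by
              have h7 : (1:ℝ) ^ (m+1) ≤ (1 + q) ^ (m+1) :=
                pow_le_pow_left₀ (by norm_num) (by linarith) (m + 1)
              simpa using h7
            nlinarith [hb0 m]
        _ = (1 + q) ^ (m + 1) * ((∑ k ∈ range m, b k) + b m) := by ring
  set T : ℝ := ∑ k ∈ range n, b k with hTdef
  have hT0 : 0 ≤ T := Finset.sum_nonneg fun k _ => hb0 k
  have hAT : ∀ j, j ≤ n → ∑ k ∈ range j, a k ≤ 2 * T := by
    intro j hj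
    have h1 := hA j hj
    have h2 : ∑ k ∈ range j, b k ≤ T := by
      rw [hTdef]
      exact Finset.sum_le_sum_of_subset_of_nonneg
        (Finset.range_subset_range.mpr hj) (fun k _ _ => hb0 k)
    have h3 : (1 + q) ^ j ≤ 2 := by
      refine le_trans ?_ hpow2
      exact pow_le_pow_right₀ (by linarith) hj
    have h4 : (0:ℝ) ≤ (1 + q) ^ j := by positivity
    calc ∑ k ∈ range j, a k ≤ (1 + q) ^ j * ∑ k ∈ range j, b k := h1
      _ ≤ 2 * T := by nlinarith [Finset.sum_nonneg (fun k (_ : k ∈ range j) => hb0 k)]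
  -- sum of squares bound
  have hB2 : T ^ 2 ≤ (n : ℝ) * ∑ k ∈ range n, b k ^ 2 := by
    have := sq_sum_le_card_mul_sum_sq (s := range n) (f := b)
    simpa [Finset.card_range] using this
  have hsum_a2 : ∑ j ∈ range n, a j ^ 2 ≤ 4 * ∑ j ∈ range n, b j ^ 2 := by
    have hstep : ∀ j, j < n → a j ^ 2 ≤ 2 * b j ^ 2 + 8 * q ^ 2 * T ^ 2 := by
      intro j hj
      have h1 : a j ≤ b j + q * (2 * T) := by
        have h5 := ha_le j (le_of_lt hj)
        have h2 := hAT j (le_of_lt hj)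
        nlinarith
      have h6 : a j * a j ≤ (b j + q * (2 * T)) * (b j + q * (2 * T)) :=
        mul_le_mul h1 h1 (ha0 j) ((ha0 j).trans h1)
      nlinarith [h6, sq_nonneg (b j - 2 * (q * T))]
    calc ∑ j ∈ range n, a j ^ 2
        ≤ ∑ j ∈ range n, (2 * b j ^ 2 + 8 * q ^ 2 * T ^ 2) :=
          Finset.sum_le_sum fun j hj => hstep j (Finset.mem_range.mp hj)
      _ = 2 * ∑ j ∈ range n, b j ^ 2 + (n : ℝ) * (8 * q ^ 2 * T ^ 2) := by
          rw [Finset.sum_add_distrib, Finset.sum_const, Finset.card_range, ← Finset.mul_sum]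
          push_cast
          ring
      _ ≤ 4 * ∑ j ∈ range n, b j ^ 2 := by
          have h1 : (n : ℝ) * (8 * q ^ 2 * T ^ 2)
              ≤ 8 * q ^ 2 * (n : ℝ) ^ 2 * ∑ k ∈ range n, b k ^ 2 := by
            have h4 := mul_le_mul_of_nonneg_left hB2
              (show (0:ℝ) ≤ 8 * q ^ 2 * (n : ℝ) by positivity)
            nlinarith [h4]
          have h2 : 8 * q ^ 2 * (n : ℝ) ^ 2 ≤ 2 := by
            have hnq0 : (0:ℝ) ≤ (n : ℝ) * q := by positivity
            nlinarith [mul_le_mul hqn hqn hnq0 (by norm_num : (0:ℝ) ≤ 1/2)]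
          have h3 : 0 ≤ ∑ k ∈ range n, b k ^ 2 :=
            Finset.sum_nonneg fun k _ => sq_nonneg _
          nlinarith
  exact hsum_a2

/-- Deterministic per-permutation epoch descent bound. -/
lemma rr_per_perm {d n : ℕ} (hn : 2 ≤ n)
    (f : Fin n → EuclideanSpace ℝ (Fin d) → ℝ)
    (F : EuclideanSpace ℝ (Fin d) → ℝ) (hFdiff : Differentiable ℝ F)
    (L Lmax : ℝ) (hL : 0 < L) (hLLmax : L ≤ Lmax)
    (hsmooth : ∀ x y : EuclideanSpace ℝ (Fin d),
      ‖gradient F x - gradient F y‖ ≤ L * ‖x - y‖)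
    (hsmooth_i : ∀ i, ∀ x y : EuclideanSpace ℝ (Fin d),
      ‖gradient (f i) x - gradient (f i) y‖ ≤ Lmax * ‖x - y‖)
    (η : ℝ) (hη0 : 0 < η) (hη1 : η * Lmax * n ≤ 1 / 2)
    (x0 : EuclideanSpace ℝ (Fin d))
    (hsumv : ∑ i, gradient (f i) x0 = (n : ℝ) • gradient F x0)
    (π : Equiv.Perm (Fin n)) :
    F (epochIter (fun i => gradient (f i)) η x0 π n)
      ≤ F x0 - η * n / 2 * ‖gradient F x0‖ ^ 2
        + 2 * η ^ 3 * Lmax ^ 2 * ∑ j ∈ range n,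
            ‖∑ k ∈ range j,
              (if h : k < n then gradient (f (π ⟨k, h⟩)) x0 else 0)‖ ^ 2 := by
  classical
  have hLmax : 0 < Lmax := lt_of_lt_of_le hL hLLmax
  have hnR : (2 : ℝ) ≤ (n : ℝ) := by exact_mod_cast hn
  have hnR0 : (0 : ℝ) < (n : ℝ) := by linarith
  have hsq := rr_sumsq_bound hn f Lmax hLmax hsmooth_i η hη0 hη1 x0 π
  set g0 : EuclideanSpace ℝ (Fin d) := gradient F x0 with hg0def
  set G2 : ℝ := ‖g0‖ ^ 2 with hG2def
  have hG2 : 0 ≤ G2 := hG2def ▸ sq_nonneg _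
  set X : ℕ → EuclideanSpace ℝ (Fin d) :=
    epochIter (fun i => gradient (f i)) η x0 π with hXdef
  set w : ℕ → EuclideanSpace ℝ (Fin d) :=
    fun k => if h : k < n then gradient (f (π ⟨k, h⟩)) (X k) else 0 with hwdef
  set vp : ℕ → EuclideanSpace ℝ (Fin d) :=
    fun k => if h : k < n then gradient (f (π ⟨k, h⟩)) x0 else 0 with hvpdef
  set S : ℕ → EuclideanSpace ℝ (Fin d) := fun j => ∑ k ∈ range j, vp k with hSdef
  set a : ℕ → ℝ := fun j => ‖X j - x0‖ with hadef
  have hsum_a2 : ∑ j ∈ range n, a j ^ 2 ≤ 4 * ∑ j ∈ range n, (η * ‖S j‖) ^ 2 := hsq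
  -- iterate formula
  have hX : ∀ j, j ≤ n → X j = x0 - η • ∑ k ∈ range j, w k := by
    intro j hj
    induction j with
    | zero => simp [hXdef, epochIter]
    | succ m ih =>
      have hm : m < n := hj
      have ihm := ih (le_of_lt hm)
      have hstep : X (m + 1) = X m - η • w m := by
        rw [hXdef]
        show epochIter (fun i => gradient (f i)) η x0 π (m + 1) = _
        rw [epochIter]
        rw [dif_pos hm]
        rw [hwdef]
        simp only [dif_pos hm]
        rfl
      rw [hstep, ihm, Finset.sum_range_succ, smul_add, sub_sub]
  have hwv : ∀ k, k < n → ‖w k - vp k‖ ≤ Lmax * a k := by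
    intro k hk
    rw [hwdef, hvpdef]
    simp only [dif_pos hk]
    exact hsmooth_i _ _ _
  -- epoch descent
  set W : EuclideanSpace ℝ (Fin d) := ∑ j ∈ range n, w j with hWdef2
  set Δ : EuclideanSpace ℝ (Fin d) := ∑ j ∈ range n, (w j - vp j) with hΔdef
  have hXn : X n - x0 = -(η • W) := by rw [hX n le_rfl]; abel
  have hvpsum : ∑ j ∈ range n, vp j = (n : ℝ) • g0 := by
    have h1 : ∑ j ∈ range n, vp j = ∑ i : Fin n, vp (i : ℕ) :=
      (Fin.sum_univ_eq_sum_range (fun k => vp k) n).symm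
    have h2 : ∀ i : Fin n, vp (i : ℕ) = gradient (f (π i)) x0 := by
      intro i
      rw [hvpdef]
      simp only [dif_pos i.isLt, Fin.eta]
    rw [h1, Finset.sum_congr rfl fun i _ => h2 i,
      Equiv.sum_comp π (fun i => gradient (f i) x0), hsumv]
  have hWsplit : W = (n : ℝ) • g0 + Δ := by
    rw [hWdef2, hΔdef, Finset.sum_sub_distrib, hvpsum]
    abel
  have hΔnorm : ‖Δ‖ ≤ Lmax * ∑ j ∈ range n, a j := by
    rw [hΔdef]
    refine le_trans (norm_sum_le _ _) ?_
    rw [Finset.mul_sum]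
    exact Finset.sum_le_sum fun j hj => hwv j (Finset.mem_range.mp hj)
  have hΔ2 : ‖Δ‖ ^ 2 ≤ Lmax ^ 2 * (n : ℝ) * ∑ j ∈ range n, a j ^ 2 := by
    have h1 : (∑ j ∈ range n, a j) ^ 2 ≤ (n : ℝ) * ∑ j ∈ range n, a j ^ 2 := by
      have := sq_sum_le_card_mul_sum_sq (s := range n) (f := a)
      simpa [Finset.card_range] using this
    have h2 : ‖Δ‖ ^ 2 ≤ (Lmax * ∑ j ∈ range n, a j) ^ 2 := by
      have hΔ0 : (0:ℝ) ≤ ‖Δ‖ := norm_nonneg _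
      nlinarith [hΔnorm]
    nlinarith [h1, sq_nonneg Lmax]
  have hdesc := rr_descent_lemma F hFdiff L hsmooth x0 (X n)
  have hinner : ⟪gradient F x0, X n - x0⟫ = -(η * ⟪g0, W⟫) := by
    rw [← hg0def, hXn, inner_neg_right, real_inner_smul_right]
  have hnormXn : ‖X n - x0‖ ^ 2 = η ^ 2 * ‖W‖ ^ 2 := by
    rw [hXn, norm_neg, norm_smul, Real.norm_eq_abs, abs_of_pos hη0, mul_pow]
  have hpolar : 2 * (n : ℝ) * ⟪g0, W⟫ = (n : ℝ) ^ 2 * G2 + ‖W‖ ^ 2 - ‖Δ‖ ^ 2 := by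
    have e1 : ‖(n : ℝ) • g0 - W‖ ^ 2
        = ‖(n : ℝ) • g0‖ ^ 2 - 2 * ⟪(n : ℝ) • g0, W⟫ + ‖W‖ ^ 2 :=
      norm_sub_sq_real _ _
    have e2 : (n : ℝ) • g0 - W = -Δ := by rw [hWsplit]; abel
    have e3 : ‖(n : ℝ) • g0‖ ^ 2 = (n : ℝ) ^ 2 * G2 := by
      rw [norm_smul, Real.norm_eq_abs, abs_of_pos hnR0, mul_pow, hG2def]
    have e4 : ⟪(n : ℝ) • g0, W⟫ = (n : ℝ) * ⟪g0, W⟫ := real_inner_smul_left _ _ _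
    rw [e2, norm_neg, e3, e4] at e1
    linarith
  have hdesc2 : F (X n) ≤ F x0 - η * n / 2 * G2
      + η * Lmax ^ 2 / 2 * ∑ j ∈ range n, a j ^ 2 := by
    have hd := hdesc
    rw [hinner, hnormXn] at hd
    have hD2 : η * ‖Δ‖ ^ 2 ≤ η * (Lmax ^ 2 * (n : ℝ) * ∑ j ∈ range n, a j ^ 2) :=
      mul_le_mul_of_nonneg_left hΔ2 (le_of_lt hη0)
    have hLn : (n : ℝ) * L * η ≤ 1 := by nlinarith [hη1, hLLmax, hη0, hLmax]
    have hP : (n : ℝ) * L * η ^ 2 * ‖W‖ ^ 2 ≤ η * ‖W‖ ^ 2 := by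
      have h0 : (0:ℝ) ≤ η * ‖W‖ ^ 2 := by positivity
      nlinarith [mul_le_mul_of_nonneg_right hLn h0]
    have hη2n : η * ⟪g0, W⟫ * (2 * n) = η * ((n : ℝ) ^ 2 * G2 + ‖W‖ ^ 2 - ‖Δ‖ ^ 2) := by
      linear_combination η * hpolar
    have hkey : (-(η * ⟪g0, W⟫) + L / 2 * (η ^ 2 * ‖W‖ ^ 2)) * (2 * n)
        ≤ (-(η * n / 2 * G2) + η * Lmax ^ 2 / 2 * ∑ j ∈ range n, a j ^ 2) * (2 * n) := by
      nlinarith [hη2n, hD2, hP]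
    have hkey2 : -(η * ⟪g0, W⟫) + L / 2 * (η ^ 2 * ‖W‖ ^ 2)
        ≤ -(η * n / 2 * G2) + η * Lmax ^ 2 / 2 * ∑ j ∈ range n, a j ^ 2 :=
      le_of_mul_le_mul_right hkey (by positivity)
    linarith [hd, hkey2]
  have hb2S : ∑ j ∈ range n, (η * ‖S j‖) ^ 2 = η ^ 2 * ∑ j ∈ range n, ‖S j‖ ^ 2 := by
    rw [Finset.mul_sum]
    exact Finset.sum_congr rfl fun j _ => by ring
  have hfin : F (X n) ≤ F x0 - η * n / 2 * G2
      + 2 * η ^ 3 * Lmax ^ 2 * ∑ j ∈ range n, ‖S j‖ ^ 2 := by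
    calc F (X n)
        ≤ F x0 - η * n / 2 * G2 + η * Lmax ^ 2 / 2 * ∑ j ∈ range n, a j ^ 2 := hdesc2
      _ ≤ F x0 - η * n / 2 * G2
          + η * Lmax ^ 2 / 2 * (4 * ∑ j ∈ range n, (η * ‖S j‖) ^ 2) := by
          have h1 : (0:ℝ) ≤ η * Lmax ^ 2 / 2 := by positivity
          nlinarith [hsum_a2]
      _ = F x0 - η * n / 2 * G2 + 2 * η ^ 3 * Lmax ^ 2 * ∑ j ∈ range n, ‖S j‖ ^ 2 := by
          rw [hb2S]
          ring
  exact hfin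

/-- Expectation (over the uniformly random permutation) of the sum of squared
partial sums of the permuted gradients. -/
lemma rr_exp_bound {E : Type*} [NormedAddCommGroup E] [InnerProductSpace ℝ E]
    {n : ℕ} (hn : 2 ≤ n) (ρ : ℝ) (hρ : 1 ≤ ρ) (v : Fin n → E) (g0 : E)
    (hsumv : ∑ i, v i = (n : ℝ) • g0)
    (hVρ : ∑ i, ‖v i‖ ^ 2 ≤ (n : ℝ) * ρ * ‖g0‖ ^ 2) :
    ∑ π : Equiv.Perm (Fin n), ∑ j ∈ range n,
        ‖∑ k ∈ range j, (if h : k < n then v (π ⟨k, h⟩) else 0)‖ ^ 2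
      ≤ (n.factorial : ℝ) * ((ρ * (n : ℝ) ^ 2 / 2 + (n : ℝ) ^ 3 / 3) * ‖g0‖ ^ 2) := by
  classical
  have hnR : (2 : ℝ) ≤ (n : ℝ) := by exact_mod_cast hn
  have hnR0 : (0 : ℝ) < (n : ℝ) := by linarith
  have hρ0 : (0 : ℝ) < ρ := lt_of_lt_of_le one_pos hρ
  have hfac0 : (0 : ℝ) < (n.factorial : ℝ) := by exact_mod_cast Nat.factorial_pos n
  set G2 : ℝ := ‖g0‖ ^ 2 with hG2def
  have hG2 : 0 ≤ G2 := hG2def ▸ sq_nonneg _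
  set V : ℝ := ∑ i, ‖v i‖ ^ 2 with hVdef
  rw [Finset.sum_comm]
  set C : ℝ := ∑ k, ∑ l ∈ univ.erase k, ⟪v k, v l⟫ with hCdef
  have hCval : C = (n : ℝ) ^ 2 * G2 - V := by
    rw [hCdef, rr_offdiag_inner_eq, hsumv, norm_smul, Real.norm_eq_abs,
      abs_of_pos hnR0, mul_pow, ← hVdef, ← hG2def]
  have hV0 : 0 ≤ V := hVdef ▸ Finset.sum_nonneg fun i _ => sq_nonneg _
  have hCle : C ≤ (n : ℝ) ^ 2 * G2 := by rw [hCval]; linarith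
  have hjbound : ∀ j ∈ range n,
      ∑ π : Equiv.Perm (Fin n),
          ‖∑ k ∈ range j, (if h : k < n then v (π ⟨k, h⟩) else 0)‖ ^ 2
        ≤ (n.factorial : ℝ) * ((ρ * (j : ℝ) + (j : ℝ) ^ 2) * G2) := by
    intro j hj
    have hjn : j < n := Finset.mem_range.mp hj
    have hjnle : (j : ℝ) ≤ (n : ℝ) := by exact_mod_cast le_of_lt hjn
    have hj0 : (0 : ℝ) ≤ (j : ℝ) := Nat.cast_nonneg j
    have hmem : ∀ m ∈ range j, m < n := fun m hm =>
      lt_of_lt_of_le (Finset.mem_range.mp hm) (le_of_lt hjn)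
    set A : Finset (Fin n) := (range j).attachFin hmem with hAdef
    have hcardA : A.card = j := (Finset.card_attachFin _ _).trans (Finset.card_range j)
    have hSA : ∀ π : Equiv.Perm (Fin n),
        (∑ k ∈ range j, (if h : k < n then v (π ⟨k, h⟩) else 0)) = ∑ i ∈ A, v (π i) := by
      intro π
      refine (Finset.sum_bij (fun (i : Fin n) (_ : i ∈ A) => (i : ℕ)) ?_ ?_ ?_ ?_).symm
      · intro i hi
        rw [hAdef, Finset.mem_attachFin] at hi
        exact hi
      · intro i _ i' _ h
        exact Fin.val_injective h
      · intro k hk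
        have hkn : k < n := hmem k hk
        refine ⟨⟨k, hkn⟩, ?_, rfl⟩
        rw [hAdef, Finset.mem_attachFin]
        exact hk
      · intro i hi
        simp only [dif_pos i.isLt, Fin.eta]
    have hkey := rr_exp_sum_sq_perm hn v A
    rw [Finset.sum_congr rfl (fun π _ => congrArg (fun z => ‖z‖ ^ 2) (hSA π)), hkey,
      hcardA, ← hVdef, ← hCdef]
    have hterm1 : ((n.factorial : ℝ) / n) * ((j : ℝ) * V)
        ≤ (n.factorial : ℝ) * (ρ * (j : ℝ) * G2) := by
      rw [div_mul_eq_mul_div, div_le_iff₀ hnR0]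
      have h := mul_le_mul_of_nonneg_left hVρ (mul_nonneg (le_of_lt hfac0) hj0)
      nlinarith [h]
    have hterm2 : ((n.factorial : ℝ) / ((n : ℝ) * ((n : ℝ) - 1)))
        * (((j : ℝ) * ((j : ℝ) - 1)) * C)
        ≤ (n.factorial : ℝ) * ((j : ℝ) ^ 2 * G2) := by
      have hpos : (0 : ℝ) < (n : ℝ) * ((n : ℝ) - 1) := by nlinarith
      have hjj1 : (0 : ℝ) ≤ (j : ℝ) * ((j : ℝ) - 1) := by
        rcases Nat.eq_zero_or_pos j with h | h
        · simp [h]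
        · have : (1 : ℝ) ≤ (j : ℝ) := by exact_mod_cast h
          nlinarith
      rcases le_or_gt C 0 with hC | hC
      · have hL0 : ((n.factorial : ℝ) / ((n : ℝ) * ((n : ℝ) - 1)))
            * (((j : ℝ) * ((j : ℝ) - 1)) * C) ≤ 0 := by
          apply mul_nonpos_of_nonneg_of_nonpos
          · positivity
          · exact mul_nonpos_of_nonneg_of_nonpos hjj1 hC
        have : (0:ℝ) ≤ (n.factorial : ℝ) * ((j : ℝ) ^ 2 * G2) := by positivity
        linarith
      · rw [div_mul_eq_mul_div, div_le_iff₀ hpos]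
        have h1 : (j : ℝ) * ((j : ℝ) - 1) * C ≤ (j : ℝ) * ((j : ℝ) - 1)
            * ((n : ℝ) ^ 2 * G2) := mul_le_mul_of_nonneg_left hCle hjj1
        have h2 : (j : ℝ) * ((j : ℝ) - 1) * (n : ℝ) ^ 2
            ≤ (j : ℝ) ^ 2 * ((n : ℝ) * ((n : ℝ) - 1)) := by
          nlinarith [mul_nonneg hj0 (sub_nonneg.mpr hjnle), hnR0, hj0]
        have h3 := mul_le_mul_of_nonneg_left h1 (le_of_lt hfac0)
        have h4 := mul_le_mul_of_nonneg_left h2 (mul_nonneg (le_of_lt hfac0) hG2)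
        nlinarith [h3, h4]
    calc ((n.factorial : ℝ) / n) * ((j : ℝ) * V)
          + ((n.factorial : ℝ) / ((n : ℝ) * ((n : ℝ) - 1)))
            * (((j : ℝ) * ((j : ℝ) - 1)) * C)
        ≤ (n.factorial : ℝ) * (ρ * (j : ℝ) * G2) + (n.factorial : ℝ) * ((j : ℝ) ^ 2 * G2) :=
          add_le_add hterm1 hterm2
      _ = (n.factorial : ℝ) * ((ρ * (j : ℝ) + (j : ℝ) ^ 2) * G2) := by ring
  calc ∑ j ∈ range n, ∑ π : Equiv.Perm (Fin n),
        ‖∑ k ∈ range j, (if h : k < n then v (π ⟨k, h⟩) else 0)‖ ^ 2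
      ≤ ∑ j ∈ range n, (n.factorial : ℝ) * ((ρ * (j : ℝ) + (j : ℝ) ^ 2) * G2) :=
        Finset.sum_le_sum hjbound
    _ = (n.factorial : ℝ) * G2 * ρ * (∑ j ∈ range n, (j : ℝ))
          + (n.factorial : ℝ) * G2 * (∑ j ∈ range n, (j : ℝ) ^ 2) := by
        rw [Finset.mul_sum, Finset.mul_sum, ← Finset.sum_add_distrib]
        exact Finset.sum_congr rfl fun j _ => by ring
    _ ≤ (n.factorial : ℝ) * ((ρ * (n : ℝ) ^ 2 / 2 + (n : ℝ) ^ 3 / 3) * G2) := by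
        have h1 := rr_sum_range_cast_le n
        have h2 := rr_sum_range_sq_le n
        have c1 : (0:ℝ) ≤ (n.factorial : ℝ) * G2 * ρ :=
          mul_nonneg (mul_nonneg (le_of_lt hfac0) hG2) (le_of_lt hρ0)
        have c2 : (0:ℝ) ≤ (n.factorial : ℝ) * G2 :=
          mul_nonneg (le_of_lt hfac0) hG2
        nlinarith [mul_le_mul_of_nonneg_left h1 c1, mul_le_mul_of_nonneg_left h2 c2]

/-- Epoch-level contraction for random reshuffling under the PL condition and
the (noiseless) strong growth condition; the expectation is over the uniformly
random permutation used in the epoch. -/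
theorem rr_epoch_contraction_pl_sgc
    (d n : ℕ) (hn : 2 ≤ n)
    (f : Fin n → EuclideanSpace ℝ (Fin d) → ℝ)
    (hdiff : ∀ i, Differentiable ℝ (f i))
    (F : EuclideanSpace ℝ (Fin d) → ℝ)
    (hF : F = fun x => (n : ℝ)⁻¹ * ∑ i, f i x)
    (L Lmax μ ρ : ℝ) (hL : 0 < L) (hμ : 0 < μ) (hLLmax : L ≤ Lmax) (hρ : 1 ≤ ρ)
    (hsmooth : ∀ x y : EuclideanSpace ℝ (Fin d),
      ‖gradient F x - gradient F y‖ ≤ L * ‖x - y‖)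
    (hsmooth_i : ∀ i, ∀ x y : EuclideanSpace ℝ (Fin d),
      ‖gradient (f i) x - gradient (f i) y‖ ≤ Lmax * ‖x - y‖)
    (xstar : EuclideanSpace ℝ (Fin d))
    (hmin : ∀ x, F xstar ≤ F x)
    (hPL : ∀ x, F x - F xstar ≤ 1 / (2 * μ) * ‖gradient F x‖ ^ 2)
    (hSGC : ∀ x, (n : ℝ)⁻¹ * ∑ i, ‖gradient (f i) x‖ ^ 2 ≤ ρ * ‖gradient F x‖ ^ 2)
    (η : ℝ) (hη0 : 0 < η)
    (hη : η ≤ min (1 / (2 * n * Lmax)) (1 / (2 * Real.sqrt 2 * Lmax * Real.sqrt (n * ρ))))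
    (x0 : EuclideanSpace ℝ (Fin d)) :
    ((Nat.factorial n : ℝ))⁻¹ *
        ∑ π : Equiv.Perm (Fin n),
          F (epochIter (fun i => gradient (f i)) η x0 π n) - F xstar
      ≤ (1 - n * μ * η / 4) * (F x0 - F xstar) := by
  classical
  have hLmax : 0 < Lmax := lt_of_lt_of_le hL hLLmax
  have hnR : (2 : ℝ) ≤ (n : ℝ) := by exact_mod_cast hn
  have hnR0 : (0 : ℝ) < (n : ℝ) := by linarith
  have hρ0 : (0 : ℝ) < ρ := lt_of_lt_of_le one_pos hρ
  have hfac0 : (0 : ℝ) < (n.factorial : ℝ) := by exact_mod_cast Nat.factorial_pos n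
  -- step size conditions
  have hη1 : η * Lmax * n ≤ 1 / 2 := by
    have h1 : η ≤ 1 / (2 * n * Lmax) := le_trans hη (min_le_left _ _)
    have h2 : (0 : ℝ) < 2 * n * Lmax := by positivity
    rw [le_div_iff₀ h2] at h1
    nlinarith
  have hη2 : η ^ 2 * Lmax ^ 2 * ((n : ℝ) * ρ) ≤ 1 / 8 := by
    have h1 : η ≤ 1 / (2 * Real.sqrt 2 * Lmax * Real.sqrt ((n : ℝ) * ρ)) :=
      le_trans hη (min_le_right _ _)
    have hs2 : (0 : ℝ) < Real.sqrt 2 := Real.sqrt_pos.mpr (by norm_num)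
    have hsnρ : (0 : ℝ) < Real.sqrt ((n : ℝ) * ρ) := Real.sqrt_pos.mpr (by positivity)
    have h2 : (0 : ℝ) < 2 * Real.sqrt 2 * Lmax * Real.sqrt ((n : ℝ) * ρ) := by positivity
    rw [le_div_iff₀ h2] at h1
    have h4 : (η * (2 * Real.sqrt 2 * Lmax * Real.sqrt ((n : ℝ) * ρ))) ^ 2 ≤ 1 := by
      nlinarith [mul_pos hη0 h2]
    have hsq2 : Real.sqrt 2 ^ 2 = 2 := Real.sq_sqrt (by norm_num)
    have hsqnρ : Real.sqrt ((n : ℝ) * ρ) ^ 2 = (n : ℝ) * ρ := Real.sq_sqrt (by positivity)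
    have h5 : (η * (2 * Real.sqrt 2 * Lmax * Real.sqrt ((n : ℝ) * ρ))) ^ 2
        = 8 * (η ^ 2 * Lmax ^ 2 * ((n : ℝ) * ρ)) := by
      have h6 : (η * (2 * Real.sqrt 2 * Lmax * Real.sqrt ((n : ℝ) * ρ))) ^ 2
          = η ^ 2 * 2 ^ 2 * Real.sqrt 2 ^ 2 * Lmax ^ 2 * Real.sqrt ((n : ℝ) * ρ) ^ 2 := by
        ring
      rw [h6, hsq2, hsqnρ]
      ring
    linarith [h4, h5.le, h5.ge]
  -- gradient structure
  have hgradF : ∀ x, HasGradientAt F ((n : ℝ)⁻¹ • ∑ i, gradient (f i) x) x := by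
    intro x
    have h := rr_gradient_avg f hdiff x
    rw [← hF] at h
    exact h
  have hgradF' : ∀ x, gradient F x = (n : ℝ)⁻¹ • ∑ i, gradient (f i) x :=
    fun x => (hgradF x).gradient
  have hFdiff : Differentiable ℝ F := fun x => (hgradF x).differentiableAt
  have hsumv : ∑ i, gradient (f i) x0 = (n : ℝ) • gradient F x0 := by
    rw [hgradF' x0, smul_smul, mul_inv_cancel₀ (ne_of_gt hnR0), one_smul]
  have hVρ : ∑ i, ‖gradient (f i) x0‖ ^ 2 ≤ (n : ℝ) * ρ * ‖gradient F x0‖ ^ 2 := by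
    have h := hSGC x0
    rw [inv_mul_le_iff₀ hnR0] at h
    calc ∑ i, ‖gradient (f i) x0‖ ^ 2
        ≤ (n : ℝ) * (ρ * ‖gradient F x0‖ ^ 2) := h
      _ = (n : ℝ) * ρ * ‖gradient F x0‖ ^ 2 := by ring
  set G2 : ℝ := ‖gradient F x0‖ ^ 2 with hG2def
  have hG2 : 0 ≤ G2 := hG2def ▸ sq_nonneg _
  -- per-permutation bound
  have hper : ∀ π : Equiv.Perm (Fin n),
      F (epochIter (fun i => gradient (f i)) η x0 π n)
        ≤ F x0 - η * n / 2 * G2 + 2 * η ^ 3 * Lmax ^ 2 * ∑ j ∈ range n,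
            ‖∑ k ∈ range j,
              (if h : k < n then gradient (f (π ⟨k, h⟩)) x0 else 0)‖ ^ 2 :=
    fun π => rr_per_perm hn f F hFdiff L Lmax hL hLLmax hsmooth hsmooth_i
      η hη0 hη1 x0 hsumv π
  -- expectation bound
  have hexp : ∑ π : Equiv.Perm (Fin n), ∑ j ∈ range n,
        ‖∑ k ∈ range j, (if h : k < n then gradient (f (π ⟨k, h⟩)) x0 else 0)‖ ^ 2
      ≤ (n.factorial : ℝ) * ((ρ * (n : ℝ) ^ 2 / 2 + (n : ℝ) ^ 3 / 3) * G2) :=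
    rr_exp_bound hn ρ hρ (fun i => gradient (f i) x0) (gradient F x0) hsumv hVρ
  -- combine
  have hsum : ∑ π : Equiv.Perm (Fin n), F (epochIter (fun i => gradient (f i)) η x0 π n)
      ≤ (n.factorial : ℝ) * (F x0 - η * n / 2 * G2
          + 2 * η ^ 3 * Lmax ^ 2 * ((ρ * (n : ℝ) ^ 2 / 2 + (n : ℝ) ^ 3 / 3) * G2)) := by
    calc ∑ π : Equiv.Perm (Fin n), F (epochIter (fun i => gradient (f i)) η x0 π n)
        ≤ ∑ π : Equiv.Perm (Fin n), (F x0 - η * n / 2 * G2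
            + 2 * η ^ 3 * Lmax ^ 2 * ∑ j ∈ range n,
              ‖∑ k ∈ range j,
                (if h : k < n then gradient (f (π ⟨k, h⟩)) x0 else 0)‖ ^ 2) :=
          Finset.sum_le_sum fun π _ => hper π
      _ = (n.factorial : ℝ) * (F x0 - η * n / 2 * G2)
          + 2 * η ^ 3 * Lmax ^ 2 * ∑ π : Equiv.Perm (Fin n), ∑ j ∈ range n,
              ‖∑ k ∈ range j,
                (if h : k < n then gradient (f (π ⟨k, h⟩)) x0 else 0)‖ ^ 2 := by
          rw [Finset.sum_add_distrib, Finset.sum_const, Finset.card_univ, Fintype.card_perm,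
            Fintype.card_fin, nsmul_eq_mul, ← Finset.mul_sum]
      _ ≤ (n.factorial : ℝ) * (F x0 - η * n / 2 * G2)
          + 2 * η ^ 3 * Lmax ^ 2
            * ((n.factorial : ℝ) * ((ρ * (n : ℝ) ^ 2 / 2 + (n : ℝ) ^ 3 / 3) * G2)) := by
          have hc : (0:ℝ) ≤ 2 * η ^ 3 * Lmax ^ 2 := by positivity
          nlinarith [hexp]
      _ = (n.factorial : ℝ) * (F x0 - η * n / 2 * G2
          + 2 * η ^ 3 * Lmax ^ 2 * ((ρ * (n : ℝ) ^ 2 / 2 + (n : ℝ) ^ 3 / 3) * G2)) := by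
          ring
  have hEavg : (n.factorial : ℝ)⁻¹
        * ∑ π : Equiv.Perm (Fin n), F (epochIter (fun i => gradient (f i)) η x0 π n)
      ≤ F x0 - η * n / 2 * G2
          + 2 * η ^ 3 * Lmax ^ 2 * ((ρ * (n : ℝ) ^ 2 / 2 + (n : ℝ) ^ 3 / 3) * G2) := by
    rw [inv_mul_le_iff₀ hfac0]
    exact hsum
  -- bound the error term
  have herr : 2 * η ^ 3 * Lmax ^ 2 * ((ρ * (n : ℝ) ^ 2 / 2 + (n : ℝ) ^ 3 / 3) * G2)
      ≤ 7 / 24 * (η * (n : ℝ)) * G2 := by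
    have h1 : η ^ 3 * Lmax ^ 2 * ρ * (n : ℝ) ^ 2 ≤ η * (n : ℝ) / 8 := by
      have := mul_le_mul_of_nonneg_left hη2 (le_of_lt (mul_pos hη0 hnR0))
      nlinarith [hη0, hnR0]
    have h2 : η ^ 3 * Lmax ^ 2 * (n : ℝ) ^ 3 ≤ η * (n : ℝ) / 4 := by
      have h0 : (0:ℝ) ≤ η * Lmax * n := by positivity
      have hq2' : (η * Lmax * (n : ℝ)) ^ 2 ≤ 1 / 4 := by
        nlinarith [mul_le_mul hη1 hη1 h0 (by norm_num : (0:ℝ) ≤ 1/2)]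
      have h4 := mul_le_mul_of_nonneg_left hq2' (le_of_lt (mul_pos hη0 hnR0))
      nlinarith [h4]
    nlinarith [hG2, h1, h2]
  -- PL condition
  have hPL0 : μ * (F x0 - F xstar) ≤ G2 / 2 := by
    have h1 := hPL x0
    have h2 : μ * (1 / (2 * μ) * ‖gradient F x0‖ ^ 2) = G2 / 2 := by
      rw [hG2def]
      have hμ0 : μ ≠ 0 := ne_of_gt hμ
      field_simp
    nlinarith [mul_le_mul_of_nonneg_left h1 (le_of_lt hμ)]
  -- final computation
  have hfinal : (n.factorial : ℝ)⁻¹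
        * ∑ π : Equiv.Perm (Fin n), F (epochIter (fun i => gradient (f i)) η x0 π n)
      ≤ F x0 - 5 / 24 * (η * (n : ℝ)) * G2 := by
    nlinarith [hEavg, herr]
  have hdrop : (n : ℝ) * μ * η / 4 * (F x0 - F xstar) ≤ 5 / 24 * (η * (n : ℝ)) * G2 := by
    have h2 : (0 : ℝ) ≤ (n : ℝ) * η / 4 := by positivity
    calc (n : ℝ) * μ * η / 4 * (F x0 - F xstar)
        = (n : ℝ) * η / 4 * (μ * (F x0 - F xstar)) := by ring
      _ ≤ (n : ℝ) * η / 4 * (G2 / 2) := mul_le_mul_of_nonneg_left hPL0 h2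
      _ ≤ 5 / 24 * (η * (n : ℝ)) * G2 := by nlinarith [hG2, hη0, hnR0]
  linarith [hfinal, hdrop]
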